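/- Let ψ : ℝ^M → ℂ^D be a differentiable family of unit vectors, let K be a D×D complex matrix, set F = K†K, and suppose p(θ) = ⟨ψ(θ), F ψ(θ)⟩ > 0 on a neighborhood of θ. Define the postselected family ψ^{ps}(θ) = K ψ(θ)/√(p(θ)). Then ψ^{ps}(θ) is a unit vector and the pure-state quantum Fisher information matrix of ψ^{ps} satisfies, for all i, j: 𝓘_{ij}(θ | ψ^{ps}) = 4 Re[ ⟨∂_iψ(θ), F ∂_jψ(θ)⟩ / p(θ) − ⟨∂_iψ(θ), F ψ(θ)⟩ ⟨ψ(θ), F ∂_jψ(θ)⟩ / p(θ)² ]. -/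

import Mathlib

noncomputable section
open Matrix

/-- Standard Hermitian inner product on `ℂ^D`, conjugate-linear in the first argument. -/
def dotc {D : ℕ} (x y : Fin D → ℂ) : ℂ := ∑ d, starRingEnd ℂ (x d) * y d

/-- Partial derivative of a parametrized family with respect to the `i`-th parameter. -/
def pder {M D : ℕ} (i : Fin M) (φ : (Fin M → ℝ) → (Fin D → ℂ)) (θ : Fin M → ℝ) :
    Fin D → ℂ :=
  fderiv ℝ φ θ (Pi.single i 1)

/-- Pure-state quantum Fisher information matrix entry
`𝓘_{ij}(θ|φ) = 4 Re[⟨∂_iφ,∂_jφ⟩ − ⟨∂_iφ,φ⟩⟨φ,∂_jφ⟩]`. -/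
def qfim {M D : ℕ} (φ : (Fin M → ℝ) → (Fin D → ℂ)) (θ : Fin M → ℝ) (i j : Fin M) : ℝ :=
  4 * (dotc (pder i φ θ) (pder j φ θ) -
        dotc (pder i φ θ) (φ θ) * dotc (φ θ) (pder j φ θ)).re

lemma dotc_eq_dot {D : ℕ} (x y : Fin D → ℂ) : dotc x y = dotProduct (star x) y := rfl

lemma dotc_mulVec {D : ℕ} (K : Matrix (Fin D) (Fin D) ℂ) (x y : Fin D → ℂ) :
    dotc (K.mulVec x) (K.mulVec y) = dotc x ((Kᴴ * K).mulVec y) := by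
  rw [dotc_eq_dot, dotc_eq_dot, Matrix.star_mulVec, Matrix.dotProduct_mulVec,
    Matrix.dotProduct_mulVec, Matrix.vecMul_vecMul]

lemma dotc_add_left {D : ℕ} (x y z : Fin D → ℂ) : dotc (x + y) z = dotc x z + dotc y z := by
  simp [dotc, add_mul, Finset.sum_add_distrib]

lemma dotc_add_right {D : ℕ} (x y z : Fin D → ℂ) : dotc x (y + z) = dotc x y + dotc x z := by
  simp [dotc, mul_add, Finset.sum_add_distrib]

lemma dotc_rsmul_left {D : ℕ} (r : ℝ) (x y : Fin D → ℂ) : dotc (r • x) y = (r:ℂ) * dotc x y := by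
  simp only [dotc, Finset.mul_sum, Pi.smul_apply, Complex.real_smul, _root_.map_mul,
    Complex.conj_ofReal]
  exact Finset.sum_congr rfl fun d _ => by ring

lemma dotc_rsmul_right {D : ℕ} (r : ℝ) (x y : Fin D → ℂ) : dotc x (r • y) = (r:ℂ) * dotc x y := by
  simp only [dotc, Finset.mul_sum, Pi.smul_apply, Complex.real_smul]
  exact Finset.sum_congr rfl fun d _ => by ring

lemma dotc_conj {D : ℕ} (x y : Fin D → ℂ) : starRingEnd ℂ (dotc x y) = dotc y x := by
  simp [dotc, map_sum, mul_comm]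

lemma dotc_self_real {D : ℕ} (x : Fin D → ℂ) : dotc x x = ((dotc x x).re : ℂ) := by
  have h : starRingEnd ℂ (dotc x x) = dotc x x := dotc_conj x x
  rw [Complex.conj_eq_iff_re] at h
  exact h.symm

open Matrix in
/-- The postselected family `ψ^{ps} = Kψ/√p` consists of unit vectors, and its pure-state
QFIM is given by the postselected formula of Eq. (8) of the paper (in inner-product form). -/
theorem psqfim_formula
    (M D : ℕ) (ψ : (Fin M → ℝ) → (Fin D → ℂ))
    (hψ : Differentiable ℝ ψ)
    (hunit : ∀ θ, dotc (ψ θ) (ψ θ) = 1)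
    (K : Matrix (Fin D) (Fin D) ℂ) (F : Matrix (Fin D) (Fin D) ℂ)
    (hF : F = Kᴴ * K)
    (p : (Fin M → ℝ) → ℝ)
    (hp : ∀ θ, p θ = (dotc (ψ θ) (F.mulVec (ψ θ))).re)
    (θ : Fin M → ℝ)
    (hppos : ∀ᶠ θ' in nhds θ, 0 < p θ')
    (ψps : (Fin M → ℝ) → (Fin D → ℂ))
    (hψps : ∀ θ', ψps θ' = (Real.sqrt (p θ'))⁻¹ • K.mulVec (ψ θ')) :
    dotc (ψps θ) (ψps θ) = 1 ∧
    ∀ i j, qfim ψps θ i j =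
      4 * (dotc (pder i ψ θ) (F.mulVec (pder j ψ θ)) / (p θ : ℂ) -
            dotc (pder i ψ θ) (F.mulVec (ψ θ)) * dotc (ψ θ) (F.mulVec (pder j ψ θ)) /
              (p θ : ℂ) ^ 2).re := by
  have hpθ : 0 < p θ := hppos.self_of_nhds
  -- the dotc with K on both sides
  have hKK : ∀ x y : Fin D → ℂ,
      dotc (K.mulVec x) (K.mulVec y) = dotc x (F.mulVec y) := by
    intro x y; rw [hF, dotc_mulVec]
  set u : Fin D → ℂ := K.mulVec (ψ θ) with hu
  have huu : dotc u u = ((p θ : ℝ) : ℂ) := by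
    rw [hu, hKK, hp θ, ← hKK, ← hu]
    exact dotc_self_real u
  set s : ℝ := (Real.sqrt (p θ))⁻¹ with hs
  have hsqrt_pos : 0 < Real.sqrt (p θ) := Real.sqrt_pos.mpr hpθ
  have hs2 : s ^ 2 * p θ = 1 := by
    rw [hs, inv_pow, Real.sq_sqrt hpθ.le]
    exact inv_mul_cancel₀ hpθ.ne'
  -- unit vector part
  have hunit_ps : dotc (ψps θ) (ψps θ) = 1 := by
    rw [hψps θ, dotc_rsmul_left, dotc_rsmul_right, huu, ← hs]
    push_cast
    rw [show ((s:ℂ) * ((s:ℂ) * (p θ : ℂ))) = ((s^2 * p θ : ℝ) : ℂ) by push_cast; ring, hs2]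
    norm_num
  refine ⟨hunit_ps, ?_⟩
  -- differentiability of p
  have hcomp : ∀ d : Fin D, Differentiable ℝ (fun θ' => ψ θ' d) := fun d =>
    (ContinuousLinearMap.proj d (R := ℝ) (φ := fun _ : Fin D => ℂ)).differentiable.comp hψ
  have hdotdiff : Differentiable ℝ (fun θ' => dotc (ψ θ') (F.mulVec (ψ θ'))) := by
    simp only [dotc, Matrix.mulVec, dotProduct]
    refine Differentiable.fun_sum fun d _ => Differentiable.mul ?_ ?_
    · exact Complex.conjCLE.differentiable.comp (hcomp d)
    · exact Differentiable.fun_sum fun e _ => (differentiable_const _).mul (hcomp e)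
  have hpdiff : Differentiable ℝ p := by
    have : p = fun θ' => (dotc (ψ θ') (F.mulVec (ψ θ'))).re := funext hp
    rw [this]
    exact Complex.reCLM.differentiable.comp hdotdiff
  -- differentiability of g = (sqrt ∘ p)⁻¹ at θ
  set g : (Fin M → ℝ) → ℝ := fun θ' => (Real.sqrt (p θ'))⁻¹ with hg
  have hgdiff : DifferentiableAt ℝ g θ := by
    have h1 : DifferentiableAt ℝ (fun θ' => Real.sqrt (p θ')) θ :=
      (hpdiff θ).sqrt hpθ.ne'
    exact h1.inv hsqrt_pos.ne'
  -- the linear map given by K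
  set L : (Fin D → ℂ) →L[ℝ] (Fin D → ℂ) :=
    LinearMap.toContinuousLinearMap ((Matrix.mulVecLin K).restrictScalars ℝ) with hL
  have hLa : ∀ x, L x = K.mulVec x := fun x => rfl
  have hKfun : (fun θ' => K.mulVec (ψ θ')) = fun θ' => L (ψ θ') := by
    funext θ'; rw [hLa]
  have hdK : DifferentiableAt ℝ (fun θ' => K.mulVec (ψ θ')) θ := by
    rw [hKfun]; exact (L.differentiable.comp hψ).differentiableAt
  -- computing the partial derivatives of ψps
  set a : Fin M → ℝ := fun i => fderiv ℝ g θ (Pi.single i 1) with ha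
  have hpsps : ψps = fun θ' => g θ' • K.mulVec (ψ θ') := funext hψps
  have hpder : ∀ i, pder i ψps θ = (a i) • u + s • K.mulVec (pder i ψ θ) := by
    intro i
    rw [pder, hpsps, fderiv_fun_smul hgdiff hdK]
    simp only [ContinuousLinearMap.add_apply, ContinuousLinearMap.smul_apply,
      ContinuousLinearMap.smulRight_apply]
    have hfK : fderiv ℝ (fun θ' => K.mulVec (ψ θ')) θ = L.comp (fderiv ℝ ψ θ) := by
      rw [hKfun, show (fun θ' => L (ψ θ')) = ⇑L ∘ ψ from rfl,
        fderiv_comp θ L.differentiableAt (hψ θ), L.fderiv]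
    rw [hfK]
    simp only [ContinuousLinearMap.comp_apply, hLa, pder]
    module
  -- main algebraic computation
  intro i j
  set A := dotc (pder i ψ θ) (F.mulVec (pder j ψ θ)) with hA
  set B := dotc (pder i ψ θ) (F.mulVec (ψ θ)) with hB
  set C := dotc (ψ θ) (F.mulVec (pder j ψ θ)) with hC
  set q : ℂ := ((p θ : ℝ) : ℂ) with hq
  have hqne : q ≠ 0 := by
    rw [hq]; exact_mod_cast hpθ.ne'
  have hs2c : (s : ℂ) ^ 2 * q = 1 := by
    rw [hq, show ((s:ℂ)^2 * ((p θ : ℝ):ℂ)) = ((s^2 * p θ : ℝ) : ℂ) by push_cast; ring, hs2]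
    norm_num
  have hvv : dotc (K.mulVec (pder i ψ θ)) (K.mulVec (pder j ψ θ)) = A := hKK _ _
  have hvu : dotc (K.mulVec (pder i ψ θ)) u = B := hKK _ _
  have huv : dotc u (K.mulVec (pder j ψ θ)) = C := hKK _ _
  have hpsθ : ψps θ = s • u := by rw [hψps θ, hs, hu]
  rw [qfim, hpder i, hpder j, hpsθ]
  simp only [dotc_add_left, dotc_add_right, dotc_rsmul_left, dotc_rsmul_right]
  rw [huu, hvv, hvu, huv]
  have hsne : (s:ℂ) ≠ 0 := by
    exact_mod_cast (inv_pos.mpr hsqrt_pos).ne'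
  have hq_eq : q = ((s:ℂ) ^ 2)⁻¹ := by
    field_simp
    linear_combination hs2c
  rw [hq_eq]
  congr 2
  field_simp
  ring
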